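/- Let C ⊆ E be a convex set, V ⊆ E a linear subspace, and π_V the orthogonal projection onto V. If F is a face of π_V(C), then the lift (F + V^⊥) ∩ C is a face of C. Moreover, for every nonzero v ∈ V, (F⊥(π_V(C),v) + V^⊥) ∩ C = F⊥(C,v). -/

import Mathlib

open scoped Pointwise RealInnerProductSpace

variable {E : Type*} [NormedAddCommGroup E] [InnerProductSpace ℝ E] [FiniteDimensional ℝ E]

/-- `F` is a face of the convex set `C`: a convex subset of `C` such that whenever an open
segment between two points of `C` meets `F`, both endpoints belong to `F`. -/
def IsFace (C F : Set E) : Prop :=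
  Convex ℝ F ∧ F ⊆ C ∧
    ∀ x ∈ C, ∀ y ∈ C, (openSegment ℝ x y ∩ F).Nonempty → x ∈ F ∧ y ∈ F

/-- The exposed face `F⊥(C,u)` of `C` by the vector `u`: the points of `C` where `⟨u,·⟩`
attains its supremum over `C`. -/
def expFace (C : Set E) (u : E) : Set E :=
  {x ∈ C | ∀ y ∈ C, ⟪u, y⟫ ≤ ⟪u, x⟫}

/-- `F` is an exposed face of `C`: either `∅`, or `C`, or `F⊥(C,u)` for some nonzero `u`. -/
def IsExpFace (C F : Set E) : Prop :=
  F = ∅ ∨ F = C ∨ ∃ u : E, u ≠ 0 ∧ F = expFace C u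

/-- The normal cone `N(C,x)` of `C` at the point `x`. -/
def normalCone (C : Set E) (x : E) : Set E :=
  {u | ∀ y ∈ C, ⟪u, y - x⟫ ≤ 0}

/-- The normal cone `N(C,F)` of `C` at a subset `F`; for a nonempty convex `F ⊆ C` it agrees
with `normalCone C x` for any `x` in the relative interior of `F` (all these coincide), and
for `F = ∅` it is all of `E`. -/
def normalConeOf (C F : Set E) : Set E :=
  ⋂ x ∈ intrinsicInterior ℝ F, normalCone C x

/-- `N` is a normal cone of `C`: the normal cone of some face of `C`. -/
def IsNormalCone (C N : Set E) : Prop :=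
  ∃ F, IsFace C F ∧ N = normalConeOf C F

/-- `T` is a touching cone of `C`: a nonempty face of a normal cone of `C`. -/
def IsTouchingCone (C T : Set E) : Prop :=
  T.Nonempty ∧ ∃ N, IsNormalCone C N ∧ IsFace N T

/-- The positive hull of a set: all finite nonnegative combinations (`posHull ∅ = {0}`). -/
def posHull (S : Set E) : Set E :=
  {x | ∃ (k : ℕ) (c : Fin k → ℝ) (s : Fin k → E),
    (∀ i, 0 ≤ c i) ∧ (∀ i, s i ∈ S) ∧ x = ∑ i, c i • s i}

/-- A vector `u` is sharp normal for `C` if every `x ∈ ri(F⊥(C,u))` satisfies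
`u ∈ ri(N(C,x))`. -/
def SharpNormal (C : Set E) (u : E) : Prop :=
  ∀ x ∈ intrinsicInterior ℝ (expFace C u), u ∈ intrinsicInterior ℝ (normalCone C x)

/-- A point `x` is sharp exposed in `C` if every nonzero `u ∈ ri(N(C,x))` satisfies
`x ∈ ri(F⊥(C,u))`. -/
def SharpExposed (C : Set E) (x : E) : Prop :=
  ∀ u ∈ intrinsicInterior ℝ (normalCone C x), u ≠ 0 → x ∈ intrinsicInterior ℝ (expFace C u)

/-- The smallest exposed face of `C` containing `F`: the intersection of all exposed faces
of `C` containing `F`. -/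
def supExp (C F : Set E) : Set E :=
  ⋂₀ {G | IsExpFace C G ∧ F ⊆ G}

/-- The polar body of `K`. -/
def polarBody (K : Set E) : Set E := {u | ∀ y ∈ K, ⟪u, y⟫ ≤ 1}

/-- For a convex set `C` and a linear subspace `V` with orthogonal
projection `π_V`: the lift `(F + V^⊥) ∩ C` of any face `F` of `π_V(C)` is a face of `C`,
and for nonzero `v ∈ V`, `(F⊥(π_V(C),v) + V^⊥) ∩ C = F⊥(C,v)`. -/
theorem stmt_8 (C : Set E) (hC : Convex ℝ C) (V : Submodule ℝ E) :
    (∀ F, IsFace ((fun z : E => (Submodule.orthogonalProjection V z : E)) '' C) F →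
      IsFace C ((F + ((Vᗮ : Submodule ℝ E) : Set E)) ∩ C)) ∧
    (∀ v ∈ V, v ≠ 0 →
      (expFace ((fun z : E => (Submodule.orthogonalProjection V z : E)) '' C) v +
        ((Vᗮ : Submodule ℝ E) : Set E)) ∩ C = expFace C v) := by
  set π : E → E := fun z => (Submodule.orthogonalProjection V z : E) with hπ
  have hπV : ∀ z, π z ∈ V := fun z => (Submodule.orthogonalProjection V z).2
  have hπlin : ∀ (a b : ℝ) (x y : E), π (a • x + b • y) = a • π x + b • π y := by
    intro a b x y; simp [hπ, map_add, map_smul]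
  have hset : ∀ (F : Set E), F ⊆ (V : Set E) →
      (F + ((Vᗮ : Submodule ℝ E) : Set E)) = {x | π x ∈ F} := by
    intro F hF
    ext x
    constructor
    · rintro ⟨f, hf, w, hw, rfl⟩
      have h1 : π f = f := Submodule.starProjection_eq_self_iff.mpr (hF hf)
      have h2 : π w = 0 := by
        have := Submodule.orthogonalProjectionOnto_apply_of_mem_orthogonal hw
        simpa [hπ] using congrArg Subtype.val this
      show π (f + w) ∈ F
      simp only [hπ, map_add] at *
      simpa [h1, h2] using hf
    · intro hx
      exact ⟨π x, hx, x - π x, Submodule.sub_starProjection_mem_orthogonal x, by simp⟩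
  have hinner : ∀ v ∈ V, ∀ x : E, ⟪v, x⟫ = ⟪v, π x⟫ := by
    intro v hv x
    have h0 : ⟪v, x - π x⟫ = 0 :=
      (Submodule.mem_orthogonal V _).mp (Submodule.sub_starProjection_mem_orthogonal x) v hv
    have := inner_sub_right (𝕜 := ℝ) v x (π x)
    linarith [h0, this]
  constructor
  · intro F hF
    have hFV : F ⊆ (V : Set E) := fun f hf => by
      obtain ⟨z, _, rfl⟩ := hF.2.1 hf; exact hπV z
    rw [hset F hFV]
    refine ⟨?_, fun x hx => hx.2, ?_⟩
    · rintro x ⟨hxF, hxC⟩ y ⟨hyF, hyC⟩ a b ha hb hab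
      exact ⟨by rw [Set.mem_setOf_eq, hπlin]; exact hF.1 hxF hyF ha hb hab,
        hC hxC hyC ha hb hab⟩
    · intro x hxC y hyC ⟨z, hz, hzF, hzC⟩
      obtain ⟨a, b, ha, hb, hab, rfl⟩ := hz
      have hπz : π (a • x + b • y) ∈ openSegment ℝ (π x) (π y) :=
        ⟨a, b, ha, hb, hab, (hπlin a b x y).symm⟩
      have := hF.2.2 (π x) ⟨x, hxC, rfl⟩ (π y) ⟨y, hyC, rfl⟩ ⟨_, hπz, hzF⟩
      exact ⟨⟨this.1, hxC⟩, ⟨this.2, hyC⟩⟩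
  · intro v hv hv0
    have hFV : expFace (π '' C) v ⊆ (V : Set E) := fun f hf => by
      obtain ⟨z, _, rfl⟩ := hf.1; exact hπV z
    rw [hset _ hFV]
    ext x
    constructor
    · rintro ⟨⟨hπxC, hmax⟩, hxC⟩
      refine ⟨hxC, fun y hyC => ?_⟩
      rw [hinner v hv x, hinner v hv y]
      exact hmax (π y) ⟨y, hyC, rfl⟩
    · rintro ⟨hxC, hmax⟩
      refine ⟨⟨⟨x, hxC, rfl⟩, ?_⟩, hxC⟩
      rintro _ ⟨y, hyC, rfl⟩
      rw [← hinner v hv x, ← hinner v hv y]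
      exact hmax y hyC
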